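/- arXiv:1408.5065 — 3 statements merged into one kernel-verified Lean document; each statement's English description precedes it below -/
import Mathlib

section
/- Let 0 ≤ ξ, ζ < ω₁ be countable ordinals. Then there exists an infinite L ⊆ ℕ such that 𝓢_ξ[𝓢_ζ](L) ⊆ 𝓢_{ζ+ξ}, and this inclusion still holds when L is replaced by any spread of L. -/
open Filter Topology

noncomputable section

/-- The first uncountable ordinal `ω₁`. -/
def omega1 : Ordinal := (Cardinal.aleph 1).ord

/-- The combinatorial operation `𝓕[𝓖]` on families of finite subsets of `ℕ`:
all unions `E₁ ∪ ⋯ ∪ Eₙ` with `E₁ < ⋯ < Eₙ` nonempty members of `𝓖` and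
`(min Eᵢ)ᵢ ∈ 𝓕`. -/
def famOp (F G : Set (Finset ℕ)) : Set (Finset ℕ) :=
  {E | ∃ (n : ℕ) (Es : ℕ → Finset ℕ),
    (∀ i < n, Es i ∈ G) ∧ (∀ i < n, (Es i).Nonempty) ∧
    (∀ i j : ℕ, i < j → j < n → ∀ a ∈ Es i, ∀ b ∈ Es j, a < b) ∧
    (Finset.image (fun i => sInf ((Es i : Set ℕ))) (Finset.range n) ∈ F) ∧
    E = (Finset.range n).biUnion Es}

/-- The first Schreier family `𝓢₁ = {E : |E| ≤ min E}`. -/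
def schreierOne : Set (Finset ℕ) := {E : Finset ℕ | ∀ n ∈ E, E.card ≤ n}

section Helpers

variable {F G H : Set (Finset ℕ)}

lemma sInf_finset_mem {s : Finset ℕ} (hs : s.Nonempty) : sInf (s : Set ℕ) ∈ s := by
  have := Nat.sInf_mem (s := (s : Set ℕ)) (by exact_mod_cast hs)
  exact_mod_cast this

lemma sInf_finset_le {s : Finset ℕ} {a : ℕ} (ha : a ∈ s) : sInf (s : Set ℕ) ≤ a :=
  Nat.sInf_le (by exact_mod_cast ha)

lemma sInf_finset_eq {s : Finset ℕ} {a : ℕ} (ha : a ∈ s) (h : ∀ b ∈ s, a ≤ b) :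
    sInf (s : Set ℕ) = a :=
  le_antisymm (sInf_finset_le ha) (h _ (sInf_finset_mem ⟨a, ha⟩))

lemma sInf_finset_image {g : ℕ → ℕ} (hg : Monotone g) {s : Finset ℕ} (hs : s.Nonempty) :
    sInf ((s.image g : Finset ℕ) : Set ℕ) = g (sInf (s : Set ℕ)) := by
  apply sInf_finset_eq
  · exact Finset.mem_image_of_mem g (sInf_finset_mem hs)
  · rintro b hb
    rcases Finset.mem_image.1 hb with ⟨a, ha, rfl⟩
    exact hg (sInf_finset_le ha)

lemma sInf_blocks_lt {n : ℕ} {Es : ℕ → Finset ℕ} (hne : ∀ i < n, (Es i).Nonempty)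
    (hinc : ∀ i j : ℕ, i < j → j < n → ∀ a ∈ Es i, ∀ b ∈ Es j, a < b) :
    ∀ i j, i < j → j < n → sInf ((Es i : Set ℕ)) < sInf ((Es j : Set ℕ)) :=
  fun i j hij hj => hinc i j hij hj _ (sInf_finset_mem (hne i (hij.trans hj)))
    _ (sInf_finset_mem (hne j hj))

lemma famOp_mono_right (hGH : G ⊆ H) : famOp F G ⊆ famOp F H := by
  rintro E ⟨n, Es, h1, h2, h3, h4, h5⟩
  exact ⟨n, Es, fun i hi => hGH (h1 i hi), h2, h3, h4, h5⟩

lemma schreierOne_empty : (∅ : Finset ℕ) ∈ schreierOne := by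
  intro n hn; simp at hn

lemma empty_mem_famOp (hF : (∅ : Finset ℕ) ∈ F) : (∅ : Finset ℕ) ∈ famOp F G := by
  refine ⟨0, fun _ => ∅, ?_, ?_, ?_, ?_, ?_⟩
  · intro i hi; omega
  · intro i hi; omega
  · intro i j hij hj; omega
  · simpa using hF
  · simp

lemma mem_famOp_of_finset {E : Finset ℕ} (I : Finset ℕ) (Es : ℕ → Finset ℕ)
    (h1 : ∀ i ∈ I, Es i ∈ G) (h2 : ∀ i ∈ I, (Es i).Nonempty)
    (h3 : ∀ i ∈ I, ∀ j ∈ I, i < j → ∀ a ∈ Es i, ∀ b ∈ Es j, a < b)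
    (h4 : I.image (fun i => sInf ((Es i : Set ℕ))) ∈ F)
    (h5 : E = I.biUnion Es) : E ∈ famOp F G := by
  classical
  set k := I.card with hk
  set φ : Fin k → ℕ := fun m => I.orderEmbOfFin rfl m with hφ
  have hφmem : ∀ m, φ m ∈ I := fun m => I.orderEmbOfFin_mem rfl m
  have hφmono : StrictMono φ := (I.orderEmbOfFin rfl).strictMono
  have hφsurj : ∀ i ∈ I, ∃ m : Fin k, φ m = i := by
    intro i hi
    have : i ∈ Set.range (I.orderEmbOfFin rfl) := by
      rw [Finset.range_orderEmbOfFin]; exact_mod_cast hi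
    exact this
  refine ⟨k, fun i => if h : i < k then Es (φ ⟨i, h⟩) else ∅, ?_, ?_, ?_, ?_, ?_⟩
  · intro i hi; simp only [dif_pos hi]; exact h1 _ (hφmem _)
  · intro i hi; simp only [dif_pos hi]; exact h2 _ (hφmem _)
  · intro i j hij hj a ha b hb
    simp only [dif_pos (hij.trans hj)] at ha
    simp only [dif_pos hj] at hb
    exact h3 _ (hφmem _) _ (hφmem _) (hφmono (show (⟨i, hij.trans hj⟩ : Fin k) < ⟨j, hj⟩ from hij))
      a ha b hb
  · have : Finset.image (fun i => sInf (((if h : i < k then Es (φ ⟨i, h⟩) else ∅) : Finset ℕ) : Set ℕ))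
        (Finset.range k) = I.image (fun i => sInf ((Es i : Set ℕ))) := by
      apply Finset.ext; intro b
      simp only [Finset.mem_image, Finset.mem_range]
      constructor
      · rintro ⟨i, hi, hb⟩
        simp only [dif_pos hi] at hb
        exact ⟨φ ⟨i, hi⟩, hφmem _, hb⟩
      · rintro ⟨i, hi, hb⟩
        obtain ⟨m, rfl⟩ := hφsurj i hi
        refine ⟨m.1, m.2, ?_⟩
        simp only [dif_pos m.2, Fin.eta]
        exact hb
    rw [this]; exact h4
  · rw [h5]; apply Finset.ext; intro a
    simp only [Finset.mem_biUnion, Finset.mem_range]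
    constructor
    · rintro ⟨i, hi, ha⟩
      obtain ⟨m, rfl⟩ := hφsurj i hi
      refine ⟨m.1, m.2, ?_⟩
      simp only [dif_pos m.2, Fin.eta]
      exact ha
    · rintro ⟨i, hi, ha⟩
      simp only [dif_pos hi] at ha
      exact ⟨_, hφmem _, ha⟩

end Helpers

section Helpers2

variable {F G H : Set (Finset ℕ)}

lemma schreierOne_image {g : ℕ → ℕ} (hg : StrictMono g) {M : Finset ℕ}
    (hM : M ∈ schreierOne) : M.image g ∈ schreierOne := by
  intro b hb
  rcases Finset.mem_image.1 hb with ⟨m, hm, rfl⟩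
  calc (M.image g).card ≤ M.card := Finset.card_image_le
    _ ≤ m := hM m hm
    _ ≤ g m := hg.le_apply

lemma famOp_assoc_subset : famOp (famOp F G) H ⊆ famOp F (famOp G H) := by
  classical
  rintro E ⟨n, Es, hH, hne, hinc, hF, rfl⟩
  obtain ⟨k, Ms, hMsG, hMsne, hMsinc, hMsF, hM⟩ := hF
  set f : ℕ → ℕ := fun i => sInf ((Es i : Set ℕ)) with hf
  have hfmono : ∀ i j, i < j → j < n → f i < f j := sInf_blocks_lt hne hinc
  set Is : ℕ → Finset ℕ := fun j => (Finset.range n).filter (fun i => f i ∈ Ms j) with hIs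
  set Fs : ℕ → Finset ℕ := fun j => (Is j).biUnion Es with hFs
  have hIlt : ∀ j, ∀ i ∈ Is j, i < n := fun j i hi =>
    Finset.mem_range.1 (Finset.mem_filter.1 hi).1
  have hIf : ∀ j, ∀ i ∈ Is j, f i ∈ Ms j := fun j i hi => (Finset.mem_filter.1 hi).2
  have hfrom : ∀ j, j < k → ∀ m ∈ Ms j, ∃ i ∈ Is j, f i = m := by
    intro j hj m hm
    have hmM : m ∈ Finset.image f (Finset.range n) := by
      rw [hM]; exact Finset.mem_biUnion.2 ⟨j, Finset.mem_range.2 hj, hm⟩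
    rcases Finset.mem_image.1 hmM with ⟨i, hi, hfi⟩
    exact ⟨i, Finset.mem_filter.2 ⟨hi, hfi.symm ▸ hm⟩, hfi⟩
  have himage : ∀ j, j < k → (Is j).image f = Ms j := by
    intro j hj
    apply Finset.ext; intro b
    constructor
    · intro hb; rcases Finset.mem_image.1 hb with ⟨i, hi, rfl⟩; exact hIf j i hi
    · intro hb; rcases hfrom j hj b hb with ⟨i, hi, hfi⟩
      exact Finset.mem_image.2 ⟨i, hi, hfi⟩
  have hFsne : ∀ j, j < k → (Fs j).Nonempty := by
    intro j hj
    obtain ⟨m, hm⟩ := hMsne j hj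
    obtain ⟨i, hi, _⟩ := hfrom j hj m hm
    obtain ⟨a, ha⟩ := hne i (hIlt j i hi)
    exact ⟨a, Finset.mem_biUnion.2 ⟨i, hi, ha⟩⟩
  have hIsep : ∀ j j', j < j' → j' < k → ∀ i ∈ Is j, ∀ i' ∈ Is j', i < i' := by
    intro j j' hjj' hj' i hi i' hi'
    have h1 : f i < f i' := hMsinc j j' hjj' hj' _ (hIf j i hi) _ (hIf j' i' hi')
    rcases lt_trichotomy i i' with h | h | h
    · exact h
    · rw [h] at h1; omega
    · have := hfmono i' i h (hIlt j i hi); omega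
  have hsinfFs : ∀ j, j < k → sInf ((Fs j : Set ℕ)) = sInf ((Ms j : Set ℕ)) := by
    intro j hj
    apply sInf_finset_eq
    · have h1 : sInf ((Ms j : Set ℕ)) ∈ Ms j := sInf_finset_mem (hMsne j hj)
      obtain ⟨i, hi, hfi⟩ := hfrom j hj _ h1
      have h2 : f i ∈ Es i := sInf_finset_mem (hne i (hIlt j i hi))
      rw [← hfi]
      exact Finset.mem_biUnion.2 ⟨i, hi, h2⟩
    · intro b hb
      rcases Finset.mem_biUnion.1 hb with ⟨i, hi, hbi⟩
      exact le_trans (sInf_finset_le (hIf j i hi)) (sInf_finset_le hbi)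
  refine ⟨k, Fs, ?_, hFsne, ?_, ?_, ?_⟩
  · intro j hj
    apply mem_famOp_of_finset (Is j) Es
    · intro i hi; exact hH i (hIlt j i hi)
    · intro i hi; exact hne i (hIlt j i hi)
    · intro i hi i' hi' hii' a ha b hb; exact hinc i i' hii' (hIlt j i' hi') a ha b hb
    · show Finset.image f (Is j) ∈ G
      rw [himage j hj]; exact hMsG j hj
    · rfl
  · intro j j' hjj' hj' a ha b hb
    rcases Finset.mem_biUnion.1 ha with ⟨i, hi, hai⟩
    rcases Finset.mem_biUnion.1 hb with ⟨i', hi', hbi'⟩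
    exact hinc i i' (hIsep j j' hjj' hj' i hi i' hi') (hIlt j' i' hi') a hai b hbi'
  · have h : Finset.image (fun j => sInf ((Fs j : Set ℕ))) (Finset.range k)
        = Finset.image (fun j => sInf ((Ms j : Set ℕ))) (Finset.range k) := by
      apply Finset.image_congr
      intro j hj
      simp only [Finset.coe_range, Set.mem_Iio] at hj
      exact hsinfFs j hj
    rw [h]; exact hMsF
  · apply Finset.ext; intro a
    simp only [Finset.mem_biUnion, Finset.mem_range]
    constructor
    · rintro ⟨i, hi, ha⟩
      have hfi : f i ∈ Finset.image f (Finset.range n) :=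
        Finset.mem_image_of_mem f (Finset.mem_range.2 hi)
      rw [hM] at hfi
      rcases Finset.mem_biUnion.1 hfi with ⟨j, hj, hfj⟩
      exact ⟨j, Finset.mem_range.1 hj,
        Finset.mem_biUnion.2 ⟨i, Finset.mem_filter.2 ⟨Finset.mem_range.2 hi, hfj⟩, ha⟩⟩
    · rintro ⟨j, hj, ha⟩
      rcases Finset.mem_biUnion.1 ha with ⟨i, hi, hai⟩
      exact ⟨i, hIlt j i hi, hai⟩

lemma famOp_image {g : ℕ → ℕ} (hg : StrictMono g) {G G' : Set (Finset ℕ)}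
    (hGG' : ∀ X ∈ G, X.image g ∈ G') {E : Finset ℕ}
    (hE : E ∈ famOp schreierOne G) : E.image g ∈ famOp schreierOne G' := by
  obtain ⟨n, Es, hG, hne, hinc, hS1, rfl⟩ := hE
  refine ⟨n, fun i => (Es i).image g, ?_, ?_, ?_, ?_, ?_⟩
  · intro i hi; exact hGG' _ (hG i hi)
  · intro i hi; exact (hne i hi).image g
  · intro i j hij hj a ha b hb
    rcases Finset.mem_image.1 ha with ⟨a', ha', rfl⟩
    rcases Finset.mem_image.1 hb with ⟨b', hb', rfl⟩
    exact hg (hinc i j hij hj a' ha' b' hb')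
  · have h : Finset.image (fun i => sInf ((((Es i).image g : Finset ℕ)) : Set ℕ))
        (Finset.range n)
        = (Finset.image (fun i => sInf ((Es i : Set ℕ))) (Finset.range n)).image g := by
      rw [Finset.image_image]
      apply Finset.image_congr
      intro i hi
      simp only [Finset.coe_range, Set.mem_Iio] at hi
      simp only [Function.comp]
      exact sInf_finset_image hg.monotone (hne i hi)
    rw [h]
    exact schreierOne_image hg hS1
  · rw [Finset.biUnion_image]


/-- A system of Schreier families `(𝓢_ξ)` together with the fixed cofinal sequences
`(ξ_n)` used at countable limit ordinals: `𝓢_0 = {∅} ∪ {{n} : n ∈ ℕ}`,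
`𝓢_{ξ+1} = 𝓢₁[𝓢_ξ]`, and at a countable limit `ξ`,
`𝓢_ξ = {E : ∃ n, n ≤ min E ∧ E ∈ 𝓢_{ξ_n}}` where `ξ_n ↑ ξ` and
`𝓢_{ξ_n} ⊆ 𝓢_{ξ_{n+1}}`. -/
structure SchreierSystem where
  S : Ordinal → Set (Finset ℕ)
  seq : Ordinal → ℕ → Ordinal
  S_zero : S 0 = {E : Finset ℕ | E = ∅ ∨ ∃ n : ℕ, E = {n}}
  S_succ : ∀ ξ : Ordinal, S (ξ + 1) = famOp schreierOne (S ξ)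
  seq_strictMono : ∀ ξ : Ordinal, ξ < omega1 → Order.IsSuccLimit ξ → StrictMono (seq ξ)
  seq_lt : ∀ ξ : Ordinal, ξ < omega1 → Order.IsSuccLimit ξ → ∀ n : ℕ, seq ξ n < ξ
  seq_iSup : ∀ ξ : Ordinal, ξ < omega1 → Order.IsSuccLimit ξ → (⨆ n : ℕ, seq ξ n) = ξ
  S_seq_mono : ∀ ξ : Ordinal, ξ < omega1 → Order.IsSuccLimit ξ → ∀ n : ℕ, S (seq ξ n) ⊆ S (seq ξ (n + 1))
  S_limit : ∀ ξ : Ordinal, ξ < omega1 → Order.IsSuccLimit ξ →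
    S ξ = {E : Finset ℕ | ∃ n : ℕ, (∀ m ∈ E, n ≤ m) ∧ E ∈ S (seq ξ n)}

/-- The image family `𝓕(g) = {g(E) : E ∈ 𝓕}` of a family under a map `g : ℕ → ℕ`
(for a strictly monotone `g` this is `𝓕(M)` where `M = g(ℕ)`). -/
def famMap (g : ℕ → ℕ) (F : Set (Finset ℕ)) : Set (Finset ℕ) :=
  (fun E : Finset ℕ => E.image g) '' F


section Helpers3

variable {F G : Set (Finset ℕ)}

lemma famMap_mono {g : ℕ → ℕ} (h : F ⊆ G) : famMap g F ⊆ famMap g G :=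
  Set.image_mono h

lemma famMap_famOp_schreierOne {g : ℕ → ℕ} (hg : StrictMono g) (G : Set (Finset ℕ)) :
    famMap g (famOp schreierOne G) ⊆ famOp schreierOne (famMap g G) := by
  rintro _ ⟨E, hE, rfl⟩
  exact famOp_image (G' := famMap g G) hg (fun X hX => Set.mem_image_of_mem _ hX) hE

lemma add_lt_omega1 {a b : Ordinal} (ha : a < omega1) (hb : b < omega1) :
    a + b < omega1 := by
  rw [omega1, Cardinal.lt_ord] at *
  rw [Ordinal.card_add]
  exact Cardinal.add_lt_of_lt (Cardinal.aleph0_le_aleph 1) ha hb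

end Helpers3

namespace SchreierSystem

lemma seq_le_exists (SS : SchreierSystem) {β : Ordinal} (hβ : β < omega1) (hlim : Order.IsSuccLimit β)
    {α : Ordinal} (hα : α < β) : ∃ m : ℕ, α ≤ SS.seq β m := by
  have h : α < ⨆ n : ℕ, SS.seq β n := by rw [SS.seq_iSup β hβ hlim]; exact hα
  rw [Ordinal.lt_iSup_iff] at h
  obtain ⟨m, hm⟩ := h
  exact ⟨m, hm.le⟩

lemma empty_mem (SS : SchreierSystem) : ∀ β, β < omega1 → (∅ : Finset ℕ) ∈ SS.S β := by
  intro β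
  induction β using Ordinal.induction with
  | h β IH =>
  intro hβ
  rcases Ordinal.zero_or_succ_or_isSuccLimit β with rfl | ⟨γ, rfl⟩ | hlim
  · rw [SS.S_zero]; exact Or.inl rfl
  · rw [← Ordinal.add_one_eq_succ, SS.S_succ]
    exact empty_mem_famOp schreierOne_empty
  · rw [SS.S_limit β hβ hlim]
    have h0 := SS.seq_lt β hβ hlim 0
    exact ⟨0, by simp, IH _ h0 (h0.trans hβ)⟩

lemma image_mem (SS : SchreierSystem) : ∀ β, β < omega1 → ∀ g : ℕ → ℕ, StrictMono g →
    ∀ E ∈ SS.S β, E.image g ∈ SS.S β := by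
  intro β
  induction β using Ordinal.induction with
  | h β IH =>
  intro hβ g hg E hE
  rcases Ordinal.zero_or_succ_or_isSuccLimit β with rfl | ⟨γ, rfl⟩ | hlim
  · rw [SS.S_zero] at hE ⊢
    rcases hE with rfl | ⟨m, rfl⟩
    · exact Or.inl (by simp)
    · exact Or.inr ⟨g m, by simp⟩
  · have hγlt : γ < Order.succ γ := Order.lt_succ γ
    rw [← Ordinal.add_one_eq_succ, SS.S_succ] at hE ⊢
    exact famOp_image hg (fun X hX => IH γ hγlt (hγlt.trans hβ) g hg X hX) hE
  · rw [SS.S_limit β hβ hlim] at hE ⊢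
    obtain ⟨m, hmin, hE'⟩ := hE
    have hs := SS.seq_lt β hβ hlim m
    refine ⟨m, ?_, IH _ hs (hs.trans hβ) g hg _ hE'⟩
    intro b hb
    rcases Finset.mem_image.1 hb with ⟨a, ha, rfl⟩
    exact le_trans (hmin a ha) hg.le_apply

lemma incl (SS : SchreierSystem) : ∀ β, β < omega1 → ∀ α, α ≤ β → ∃ N : ℕ,
    ∀ E ∈ SS.S α, (∀ a ∈ E, N ≤ a) → E ∈ SS.S β := by
  intro β
  induction β using Ordinal.induction with
  | h β IH =>
  intro hβ α hα
  rcases eq_or_lt_of_le hα with rfl | hlt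
  · exact ⟨0, fun E hE _ => hE⟩
  rcases Ordinal.zero_or_succ_or_isSuccLimit β with rfl | ⟨γ, rfl⟩ | hlim
  · exact absurd hlt (not_lt_zero (a := α))
  · have hγ1 : γ < Order.succ γ := Order.lt_succ γ
    have hγ : γ < omega1 := hγ1.trans hβ
    obtain ⟨N, hN⟩ := IH γ hγ1 hγ α (Order.lt_succ_iff.1 hlt)
    refine ⟨max N 1, fun E hE hmin => ?_⟩
    rw [← Ordinal.add_one_eq_succ, SS.S_succ]
    rcases E.eq_empty_or_nonempty with rfl | hEne
    · exact empty_mem_famOp schreierOne_empty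
    · refine ⟨1, fun _ => E, ?_, ?_, ?_, ?_, ?_⟩
      · intro i _; exact hN E hE (fun a ha => le_trans (le_max_left _ _) (hmin a ha))
      · intro i _; exact hEne
      · intro i j hij hj _ _ _ _; omega
      · simp only [Finset.range_one, Finset.image_singleton, schreierOne, Set.mem_setOf_eq]
        intro b hb
        rw [Finset.mem_singleton] at hb
        subst hb
        simp only [Finset.card_singleton]
        have h1 : sInf (E : Set ℕ) ∈ E := sInf_finset_mem hEne
        have h2 := hmin _ h1
        omega
      · simp
  · obtain ⟨m, hm⟩ := SS.seq_le_exists hβ hlim hlt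
    have hs := SS.seq_lt β hβ hlim m
    obtain ⟨N, hN⟩ := IH _ hs (hs.trans hβ) α hm
    refine ⟨max N m, fun E hE hmin => ?_⟩
    rw [SS.S_limit β hβ hlim]
    exact ⟨m, fun a ha => le_trans (le_max_right _ _) (hmin a ha),
      hN E hE (fun a ha => le_trans (le_max_left _ _) (hmin a ha))⟩

end SchreierSystem

theorem statement2_aux (SS : SchreierSystem) :
    ∀ ξ : Ordinal, ξ < omega1 → ∀ ζ : Ordinal, ζ < omega1 →
    ∃ L : ℕ → ℕ, StrictMono L ∧
      ∀ L' : ℕ → ℕ, StrictMono L' → (∀ n : ℕ, L n ≤ L' n) →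
        famMap L' (famOp (SS.S ξ) (SS.S ζ)) ⊆ SS.S (ζ + ξ) := by
  intro ξ
  induction ξ using Ordinal.induction with
  | h ξ IH =>
  intro hξ ζ hζ
  rcases Ordinal.zero_or_succ_or_isSuccLimit ξ with rfl | ⟨γ, rfl⟩ | hlim
  · -- zero case
    refine ⟨id, strictMono_id, ?_⟩
    rintro L' hL' - _ ⟨Fb, ⟨n, Es, hG, hne, hinc, hS0, rfl⟩, rfl⟩
    rw [add_zero]
    rw [SS.S_zero] at hS0
    have hinj : Set.InjOn (fun i => sInf ((Es i : Set ℕ))) ↑(Finset.range n) := by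
      intro i hi j hj hij
      simp only [Finset.coe_range, Set.mem_Iio] at hi hj
      by_contra hne'
      rcases Nat.lt_or_ge i j with h | h
      · have h2 := sInf_blocks_lt hne hinc i j h hj
        have hij' : sInf ((Es i : Set ℕ)) = sInf ((Es j : Set ℕ)) := hij
        omega
      · have hji : j < i := by omega
        have h2 := sInf_blocks_lt hne hinc j i hji hi
        have hij' : sInf ((Es i : Set ℕ)) = sInf ((Es j : Set ℕ)) := hij
        omega
    have hcard : (Finset.image (fun i => sInf ((Es i : Set ℕ))) (Finset.range n)).card = n := by
      rw [Finset.card_image_of_injOn hinj, Finset.card_range]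
    rcases hS0 with he | ⟨m, he⟩
    · rw [he] at hcard
      simp only [Finset.card_empty] at hcard
      rw [← hcard]
      simp only [Finset.range_zero, Finset.biUnion_empty, Finset.image_empty]
      exact SS.empty_mem ζ hζ
    · rw [he, Finset.card_singleton] at hcard
      have hn : n = 1 := hcard.symm
      subst hn
      have hb : (Finset.range 1).biUnion Es = Es 0 := by simp
      rw [hb]
      exact SS.image_mem ζ hζ L' hL' _ (hG 0 (by omega))
  · -- successor case
    have hγ1 : γ < Order.succ γ := Order.lt_succ γ
    have hγ : γ < omega1 := hγ1.trans hξ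
    obtain ⟨L, hL, hLP⟩ := IH γ hγ1 hγ ζ hζ
    refine ⟨L, hL, ?_⟩
    intro L' hL' hLL' E hE
    rw [← Ordinal.add_one_eq_succ, SS.S_succ] at hE
    have step1 : E ∈ famMap L' (famOp schreierOne (famOp (SS.S γ) (SS.S ζ))) :=
      famMap_mono famOp_assoc_subset hE
    have step2 := famMap_famOp_schreierOne hL' _ step1
    have step3 : E ∈ famOp schreierOne (SS.S (ζ + γ)) :=
      famOp_mono_right (hLP L' hL' hLL') step2
    have heq : ζ + Order.succ γ = ζ + γ + 1 := by
      rw [← Ordinal.add_one_eq_succ, add_assoc]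
    rw [heq, SS.S_succ]
    exact step3
  · -- limit case
    have hζξ : ζ + ξ < omega1 := add_lt_omega1 hζ hξ
    have hζξlim : Order.IsSuccLimit (ζ + ξ) := Ordinal.isSuccLimit_add ζ hlim
    have hdata : ∀ n : ℕ, ∃ (Ln : ℕ → ℕ) (Nn mn : ℕ), StrictMono Ln ∧
        (∀ L' : ℕ → ℕ, StrictMono L' → (∀ k, Ln k ≤ L' k) →
          famMap L' (famOp (SS.S (SS.seq ξ n)) (SS.S ζ)) ⊆ SS.S (ζ + SS.seq ξ n)) ∧
        (∀ E ∈ SS.S (ζ + SS.seq ξ n), (∀ a ∈ E, Nn ≤ a) →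
          E ∈ SS.S (SS.seq (ζ + ξ) mn)) := by
      intro n
      have h1 := SS.seq_lt ξ hξ hlim n
      obtain ⟨Ln, hLn, hP⟩ := IH _ h1 (h1.trans hξ) ζ hζ
      have h2 : ζ + SS.seq ξ n < ζ + ξ := (add_lt_add_iff_left ζ).2 h1
      obtain ⟨m, hm⟩ := SS.seq_le_exists hζξ hζξlim h2
      have h4 : SS.seq (ζ + ξ) m < omega1 := (SS.seq_lt _ hζξ hζξlim m).trans hζξ
      obtain ⟨N, hN⟩ := SS.incl _ h4 _ hm
      exact ⟨Ln, N, m, hLn, hP, hN⟩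
    choose Ln Nn mn hq1 hq2 hq3 using hdata
    set A : ℕ → ℕ := fun k => (Finset.range (k + 1)).sup (fun n => Ln n k + Nn n + mn n)
      with hA
    have hAn : ∀ n k, n ≤ k → Ln n k + Nn n + mn n ≤ A k := by
      intro n k h
      show Ln n k + Nn n + mn n ≤ (Finset.range (k + 1)).sup (fun n => Ln n k + Nn n + mn n)
      exact Finset.le_sup (f := fun n => Ln n k + Nn n + mn n)
        (Finset.mem_range.2 (Nat.lt_succ_of_le h))
    have hAmono : Monotone A := by
      intro k k' hkk'
      apply Finset.sup_le
      intro n hn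
      have hn' : n ≤ k' := by simp only [Finset.mem_range] at hn; omega
      have h1 : Ln n k ≤ Ln n k' := (hq1 n).monotone hkk'
      have h2 := hAn n k' hn'
      omega
    refine ⟨fun k => A k + k, ?_, ?_⟩
    · intro k k' h
      have h2 := hAmono h.le
      show A k + k < A k' + k'
      omega
    intro L' hL' hLL'
    rintro _ ⟨Fb, ⟨p, Es, hG, hne, hinc, hM, rfl⟩, rfl⟩
    rw [SS.S_limit ξ hξ hlim] at hM
    obtain ⟨n₀, hmin, hMmem⟩ := hM
    rcases Nat.eq_zero_or_pos p with rfl | hp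
    · simp only [Finset.range_zero, Finset.biUnion_empty, Finset.image_empty]
      exact SS.empty_mem _ hζξ
    have hFmin : ∀ a ∈ (Finset.range p).biUnion Es, n₀ ≤ a := by
      intro a ha
      rcases Finset.mem_biUnion.1 ha with ⟨i, hi, hai⟩
      have h1 : sInf ((Es i : Set ℕ)) ∈
          Finset.image (fun i => sInf ((Es i : Set ℕ))) (Finset.range p) :=
        Finset.mem_image_of_mem _ hi
      exact le_trans (hmin _ h1) (sInf_finset_le hai)
    have hLge : ∀ k, n₀ ≤ k → Ln n₀ k + Nn n₀ + mn n₀ ≤ L' k := by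
      intro k hk
      have h1 := hAn n₀ k hk
      have h2 : A k + k ≤ L' k := hLL' k
      omega
    set L'' : ℕ → ℕ := fun k => if k < n₀ then max (Ln n₀ k) (L' n₀ - (n₀ - k)) else L' k
      with hL''def
    have hL'n₀ : n₀ ≤ L' n₀ := hL'.le_apply
    have hmid : Ln n₀ n₀ ≤ L' n₀ := by have := hLge n₀ le_rfl; omega
    have hL''mono : StrictMono L'' := by
      intro k k' hkk'
      show (if k < n₀ then max (Ln n₀ k) (L' n₀ - (n₀ - k)) else L' k)
        < (if k' < n₀ then max (Ln n₀ k') (L' n₀ - (n₀ - k')) else L' k')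
      by_cases h1 : k' < n₀
      · rw [if_pos (hkk'.trans h1), if_pos h1]
        exact max_lt_max (hq1 n₀ hkk') (by omega)
      · rw [if_neg h1]
        by_cases h2 : k < n₀
        · rw [if_pos h2]
          have hle : L' n₀ ≤ L' k' := hL'.monotone (by omega)
          have hlt : Ln n₀ k < Ln n₀ n₀ := hq1 n₀ h2
          apply max_lt
          · omega
          · omega
        · rw [if_neg h2]
          exact hL' hkk'
    have hL''ge : ∀ k, Ln n₀ k ≤ L'' k := by
      intro k
      show Ln n₀ k ≤ if k < n₀ then max (Ln n₀ k) (L' n₀ - (n₀ - k)) else L' k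
      by_cases h : k < n₀
      · rw [if_pos h]; exact le_max_left _ _
      · rw [if_neg h]
        have := hLge k (by omega)
        omega
    have hL''eq : ∀ a ∈ (Finset.range p).biUnion Es, L'' a = L' a := by
      intro a ha
      show (if a < n₀ then max (Ln n₀ a) (L' n₀ - (n₀ - a)) else L' a) = L' a
      rw [if_neg (not_lt.2 (hFmin a ha))]
    have hEq : ((Finset.range p).biUnion Es).image L'
        = ((Finset.range p).biUnion Es).image L'' :=
      Finset.image_congr (fun a ha => (hL''eq a (Finset.mem_coe.1 ha)).symm)
    have hmem : ((Finset.range p).biUnion Es).image L'' ∈ SS.S (ζ + SS.seq ξ n₀) := by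
      apply hq2 n₀ L'' hL''mono hL''ge
      exact ⟨_, ⟨p, Es, hG, hne, hinc, hMmem, rfl⟩, rfl⟩
    have helem : ∀ b ∈ ((Finset.range p).biUnion Es).image L'',
        Nn n₀ ≤ b ∧ mn n₀ ≤ b := by
      intro b hb
      rcases Finset.mem_image.1 hb with ⟨a, ha, rfl⟩
      rw [hL''eq a ha]
      have := hLge a (hFmin a ha)
      omega
    show Finset.image L' ((Finset.range p).biUnion Es) ∈ SS.S (ζ + ξ)
    rw [hEq, SS.S_limit _ hζξ hζξlim]
    refine ⟨mn n₀, fun b hb => (helem b hb).2, ?_⟩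
    exact hq3 n₀ _ hmem (fun b hb => (helem b hb).1)



/-- For countable ordinals `ξ, ζ < ω₁` there is an infinite `L ⊆ ℕ`
(given by its increasing enumeration) such that `𝓢_ξ[𝓢_ζ](L) ⊆ 𝓢_{ζ+ξ}`, and the
inclusion persists when `L` is replaced by any spread `L'` of `L`. -/
theorem statement2 (SS : SchreierSystem) (ξ ζ : Ordinal) (hξ : ξ < omega1) (hζ : ζ < omega1) :
    ∃ L : ℕ → ℕ, StrictMono L ∧
      ∀ L' : ℕ → ℕ, StrictMono L' → (∀ n : ℕ, L n ≤ L' n) →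
        famMap L' (famOp (SS.S ξ) (SS.S ζ)) ⊆ SS.S (ζ + ξ) :=
  statement2_aux SS ξ hξ ζ hζ
end Helpers2
end
end

section
/- Let X be a Banach space with a Schauder basis and let t > 1. If D_t(X) = ξ for some countable ordinal ξ, then X is t-𝓢_ζ distortable для every countable ordinal ζ with ξ < ζ < ω₁. -/
open Filter Topology

noncomputable section

section Distortion

variable {V : Type*} [NormedAddCommGroup V] [NormedSpace ℝ V]

/-- `e` is a Schauder basis of `V`: every vector has a unique expansion
`x = Σ_i a i • e i` (convergence of the partial sums in norm). -/
def IsSchauderBasis (e : ℕ → V) : Prop :=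
  ∀ x : V, ∃! a : ℕ → ℝ,
    Filter.Tendsto (fun n => ∑ i ∈ Finset.range n, a i • e i) Filter.atTop (nhds x)

/-- `u` is a block sequence of `e`: a sequence of nonzero vectors belonging to the spans
of successive finite subsets of the basis. -/
def IsBlockSeqOf (e : ℕ → V) (u : ℕ → V) : Prop :=
  (∀ n, u n ≠ 0) ∧ ∃ E : ℕ → Finset ℕ,
    (∀ m n : ℕ, m < n → ∀ i ∈ E m, ∀ j ∈ E n, i < j) ∧
    ∀ n, u n ∈ Submodule.span ℝ (e '' (E n : Set ℕ))

/-- The closed linear span of the sequence `e` (the space with basis `e`). -/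
def spanClosure (e : ℕ → V) : Set V :=
  closure ((Submodule.span ℝ (Set.range e) : Submodule ℝ V) : Set V)

/-- `N` is (the restriction to `Xs` of) a norm equivalent to `‖·‖` on `Xs`. -/
def IsEquivNormOn (Xs : Set V) (N : V → ℝ) : Prop :=
  (∀ x ∈ Xs, ∀ y ∈ Xs, N (x + y) ≤ N x + N y) ∧
  (∀ (a : ℝ), ∀ x ∈ Xs, N (a • x) = |a| * N x) ∧
  (∃ c C : ℝ, 0 < c ∧ 0 < C ∧ ∀ x ∈ Xs, c * ‖x‖ ≤ N x ∧ N x ≤ C * ‖x‖)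

/-- `N` is a `t`-`𝓕` distortion of the space with basis `e`: an equivalent norm such that
every normalized block sequence `(u_i)` admits `E ∈ 𝓕` and vectors `v, w` in
`span{u_i : i ∈ E}` with `‖v‖ = ‖w‖ = 1` and `N v / N w > t`. -/
def IsFamDistortion (e : ℕ → V) (F : Set (Finset ℕ)) (t : ℝ) (N : V → ℝ) : Prop :=
  IsEquivNormOn (spanClosure e) N ∧
  ∀ u : ℕ → V, IsBlockSeqOf e u → (∀ n, ‖u n‖ = 1) →
    ∃ E : Finset ℕ, E ∈ F ∧ ∃ v w : V,
      v ∈ Submodule.span ℝ (u '' (E : Set ℕ)) ∧ w ∈ Submodule.span ℝ (u '' (E : Set ℕ)) ∧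
      ‖v‖ = 1 ∧ ‖w‖ = 1 ∧ t * N w < N v

/-- The space with basis `e` is `t`-distortable: some equivalent norm witnesses, on every
normalized block sequence, a ratio `> t` on some pair of normalized vectors of the span of
finitely many of its terms. -/
def IsTDistortable (e : ℕ → V) (t : ℝ) : Prop :=
  ∃ N : V → ℝ, IsEquivNormOn (spanClosure e) N ∧
    ∀ u : ℕ → V, IsBlockSeqOf e u → (∀ n, ‖u n‖ = 1) →
      ∃ E : Finset ℕ, ∃ v w : V,
        v ∈ Submodule.span ℝ (u '' (E : Set ℕ)) ∧ w ∈ Submodule.span ℝ (u '' (E : Set ℕ)) ∧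
        ‖v‖ = 1 ∧ ‖w‖ = 1 ∧ t * N w < N v

/-- The distortion index `D_t`: the least countable `ξ` such that the space with basis `e`
is `t`-`𝓢_ξ` distortable, and `ω₁` if there is no such `ξ`. -/
def Dt (SS : SchreierSystem) (e : ℕ → V) (t : ℝ) : Ordinal :=
  sInf ({ξ : Ordinal | ξ < omega1 ∧ ∃ N : V → ℝ, IsFamDistortion e (SS.S ξ) t N} ∪ {omega1})

/-- The index `AD`: the least countable `ξ` such that the space with basis `e` is
`𝓢_ξ` arbitrarily distortable (i.e. `t`-`𝓢_ξ` distortable for every `t ≥ 1`),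
and `ω₁` if there is no such `ξ`. -/
def ADidx (SS : SchreierSystem) (e : ℕ → V) : Ordinal :=
  sInf ({ξ : Ordinal | ξ < omega1 ∧
    ∀ t : ℝ, 1 ≤ t → ∃ N : V → ℝ, IsFamDistortion e (SS.S ξ) t N} ∪ {omega1})

end Distortion

lemma sInf_image_add_one (E : Finset ℕ) (hE : E.Nonempty) :
    sInf ((E.image (· + 1) : Finset ℕ) : Set ℕ) = sInf (E : Set ℕ) + 1 := by
  have h1 : sInf (E : Set ℕ) ∈ (E : Set ℕ) := Nat.sInf_mem (by exact_mod_cast hE)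
  have h2 : sInf (E : Set ℕ) + 1 ∈ ((E.image (· + 1) : Finset ℕ) : Set ℕ) :=
    Finset.mem_coe.mpr (Finset.mem_image.mpr ⟨_, Finset.mem_coe.mp h1, rfl⟩)
  apply le_antisymm
  · exact Nat.sInf_le h2
  · apply le_csInf
    · exact ⟨sInf (E : Set ℕ) + 1, h2⟩
    · rintro b hb
      simp only [Finset.coe_image, Set.mem_image] at hb
      obtain ⟨a, ha, rfl⟩ := hb
      exact Nat.succ_le_succ (Nat.sInf_le ha)

lemma shift_one_mem (SS : SchreierSystem) :
    ∀ ξ, ξ < omega1 → ∀ E ∈ SS.S ξ, E.image (· + 1) ∈ SS.S ξ := by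
  intro ξ
  induction ξ using Ordinal.induction with
  | h ξ IH =>
    intro hξ E hE
    rcases Ordinal.zero_or_succ_or_isSuccLimit ξ with rfl | ⟨η, rfl⟩ | hlim
    · rw [SS.S_zero] at hE ⊢
      rcases hE with rfl | ⟨n, rfl⟩
      · exact Or.inl rfl
      · exact Or.inr ⟨n + 1, rfl⟩
    · rw [← Ordinal.add_one_eq_succ] at *
      rw [SS.S_succ] at hE ⊢
      obtain ⟨n, Es, hG, hne, hord, hmins, hEq⟩ := hE
      refine ⟨n, fun i => (Es i).image (· + 1), fun i hi => IH η (lt_add_one η) ((lt_add_one η).trans hξ) _ (hG i hi),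
        fun i hi => (hne i hi).image _, ?_, ?_, ?_⟩
      · intro i j hij hjn a ha b hb
        simp only [Finset.mem_image] at ha hb
        obtain ⟨a', ha', rfl⟩ := ha; obtain ⟨b', hb', rfl⟩ := hb
        exact Nat.add_lt_add_right (hord i j hij hjn a' ha' b' hb') 1
      · have : (Finset.image (fun i => sInf (((Es i).image (· + 1) : Finset ℕ) : Set ℕ))
            (Finset.range n)) = (Finset.image (fun i => sInf ((Es i : Finset ℕ) : Set ℕ))
            (Finset.range n)).image (· + 1) := by
          rw [Finset.image_image]
          apply Finset.image_congr
          intro i hi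
          exact sInf_image_add_one _ (hne i (Finset.mem_range.mp hi))
        rw [this]
        intro m hm
        obtain ⟨a, ha, rfl⟩ := Finset.mem_image.mp hm
        have := hmins a ha
        calc _ = (Finset.image (fun i => sInf ((Es i : Finset ℕ) : Set ℕ))
            (Finset.range n)).card := Finset.card_image_of_injective _ (add_left_injective 1)
          _ ≤ a := this
          _ ≤ a + 1 := Nat.le_succ a
      · subst hEq; exact Finset.biUnion_image
    · rw [SS.S_limit ξ hξ hlim] at hE ⊢
      obtain ⟨n, hmin, hmem⟩ := hE
      refine ⟨n, ?_, IH _ (SS.seq_lt ξ hξ hlim n) ((SS.seq_lt ξ hξ hlim n).trans hξ) _ hmem⟩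
      intro m hm
      simp only [Finset.mem_image] at hm
      obtain ⟨a, ha, rfl⟩ := hm
      exact (hmin a ha).trans (Nat.le_succ a)

lemma shift_mem (SS : SchreierSystem) (ξ : Ordinal) (hξ : ξ < omega1)
    (E : Finset ℕ) (hE : E ∈ SS.S ξ) (k : ℕ) : E.image (· + k) ∈ SS.S ξ := by
  induction k with
  | zero => simpa using hE
  | succ k ih =>
    have := shift_one_mem SS ξ hξ _ ih
    rw [Finset.image_image] at this
    exact this

lemma wrap_mem (SS : SchreierSystem) (η : Ordinal) (E : Finset ℕ)
    (hE : E ∈ SS.S η) (h1 : ∀ m ∈ E, 1 ≤ m) : E ∈ SS.S (η + 1) := by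
  rw [SS.S_succ]
  rcases E.eq_empty_or_nonempty with rfl | hne
  · exact ⟨0, fun _ => ∅, by simp, by simp, by simp, by simp [schreierOne], by simp⟩
  · refine ⟨1, fun _ => E, fun i _ => hE, fun i _ => hne, by omega, ?_, by simp⟩
    intro m hm
    simp only [Finset.range_one, Finset.image_singleton, Finset.mem_singleton] at hm
    subst hm
    have : sInf (E : Set ℕ) ∈ (E : Set ℕ) := Nat.sInf_mem (by exact_mod_cast hne)
    simpa using h1 _ (Finset.mem_coe.mp this)

lemma min_lemma (SS : SchreierSystem) :
    ∀ ζ, ζ < omega1 → ∀ ξ < ζ, ∃ n : ℕ, ∀ E ∈ SS.S ξ, (∀ m ∈ E, n ≤ m) → E ∈ SS.S ζ := by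
  intro ζ
  induction ζ using Ordinal.induction with
  | h ζ IH =>
    intro hζ ξ hξζ
    rcases Ordinal.zero_or_succ_or_isSuccLimit ζ with rfl | ⟨η, rfl⟩ | hlim
    · exact absurd hξζ (not_lt_zero (a := ξ))
    · rw [← Ordinal.add_one_eq_succ] at hζ ⊢
      have hηζ : η < η + 1 := lt_add_one η
      rcases eq_or_lt_of_le (Order.lt_succ_iff.mp hξζ) with heq | hlt
      · subst heq
        exact ⟨1, fun E hE hm => wrap_mem SS ξ E hE hm⟩
      · obtain ⟨n, hn⟩ := IH η (Order.lt_succ η) (hηζ.trans hζ) ξ hlt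
        refine ⟨max n 1, fun E hE hm => ?_⟩
        exact wrap_mem SS η E (hn E hE fun m hmE => le_trans (le_max_left n 1) (hm m hmE))
          (fun m hmE => le_trans (le_max_right n 1) (hm m hmE))
    · have hsup := SS.seq_iSup ζ hζ hlim
      have : ξ < ⨆ n : ℕ, SS.seq ζ n := by rw [hsup]; exact hξζ
      obtain ⟨k, hk⟩ := Ordinal.lt_iSup_iff.mp this
      have hseqk : SS.seq ζ k < ζ := SS.seq_lt ζ hζ hlim k
      obtain ⟨n, hn⟩ := IH (SS.seq ζ k) hseqk (hseqk.trans hζ) ξ hk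
      refine ⟨max n k, fun E hE hm => ?_⟩
      rw [SS.S_limit ζ hζ hlim]
      exact ⟨k, fun m hmE => le_trans (le_max_right n k) (hm m hmE),
        hn E hE fun m hmE => le_trans (le_max_left n k) (hm m hmE)⟩

/-- If `D_t(X) = ξ` for some countable ordinal `ξ`, then `X` is
`t`-`𝓢_ζ` distortable for every countable ordinal `ζ` with `ξ < ζ < ω₁`. -/
theorem statement5 {X : Type*} [NormedAddCommGroup X] [NormedSpace ℝ X] [CompleteSpace X]
    (SS : SchreierSystem) (e : ℕ → X) (he : IsSchauderBasis e) (t : ℝ) (ht : 1 < t)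
    (ξ : Ordinal) (hξ : ξ < omega1) (hD : Dt SS e t = ξ)
    (ζ : Ordinal) (hζ₁ : ξ < ζ) (hζ₂ : ζ < omega1) :
    ∃ N : X → ℝ, IsFamDistortion e (SS.S ζ) t N := by
  have hmem : ξ ∈ ({ξ : Ordinal | ξ < omega1 ∧
      ∃ N : X → ℝ, IsFamDistortion e (SS.S ξ) t N} ∪ {omega1}) := by
    rw [← hD]
    exact csInf_mem ⟨omega1, Or.inr rfl⟩
  rcases hmem with ⟨-, N, hNe, hNd⟩ | h
  · refine ⟨N, hNe, ?_⟩
    intro u hu hnorm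
    obtain ⟨n, hn⟩ := min_lemma SS ζ hζ₂ ξ hζ₁
    set u' : ℕ → X := fun i => u (i + n) with hu'def
    have hu' : IsBlockSeqOf e u' := by
      obtain ⟨hne, E, hsucc, hspan⟩ := hu
      exact ⟨fun i => hne _, fun i => E (i + n),
        fun m k hmk => hsucc _ _ (by omega), fun i => hspan _⟩
    obtain ⟨F, hF, v, w, hv, hw, hv1, hw1, hlt⟩ := hNd u' hu' (fun i => hnorm _)
    have himg : u' '' (F : Set ℕ) = u '' ((F.image (· + n) : Finset ℕ) : Set ℕ) := by
      rw [Finset.coe_image, ← Set.image_comp]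
      rfl
    refine ⟨F.image (· + n), hn _ (shift_mem SS ξ hξ F hF n) ?_, v, w, ?_, ?_, hv1, hw1, hlt⟩
    · intro m hm
      obtain ⟨a, -, rfl⟩ := Finset.mem_image.mp hm
      omega
    · rw [← himg]; exact hv
    · rw [← himg]; exact hw
  · exact absurd (Set.mem_singleton_iff.mp h ▸ hξ) (lt_irrefl _)
end
end

section
/- Let X be a Banach space with a Schauder basis. Then AD(X) = sup_{n∈ℕ} D_n(X), where the supremum is taken over all natural numbers n (regarded as ordinals in ω₁ + 1). -/
open Filter Topology

noncomputable section

section Aux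

lemma empty_mem_S (SS : SchreierSystem) : ∀ ξ : Ordinal, ξ < omega1 → (∅ : Finset ℕ) ∈ SS.S ξ := by
  intro ξ
  induction ξ using Ordinal.limitRecOn with
  | zero => intro _; rw [SS.S_zero]; exact Or.inl rfl
  | add_one η ih =>
    intro hlt
    have hη : η < omega1 := lt_trans (lt_add_one η) hlt
    rw [SS.S_succ]
    refine ⟨0, fun _ => ∅, ?_, ?_, ?_, ?_, ?_⟩
    · intro i hi; omega
    · intro i hi; omega
    · intro i j hij hj; omega
    · intro n hn; simp at hn
    · simp
  | limit η hlim ih =>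
    intro hlt
    rw [SS.S_limit η hlt hlim]
    exact ⟨0, fun m hm => by simp at hm, ih (SS.seq η 0) (SS.seq_lt η hlt hlim 0)
      (lt_trans (SS.seq_lt η hlt hlim 0) hlt)⟩

lemma shift_sInf (F : Finset ℕ) (hF : F.Nonempty) (k : ℕ) :
    sInf ((F.image (· + k) : Finset ℕ) : Set ℕ) = sInf (F : Set ℕ) + k := by
  have h1 : sInf (F : Set ℕ) ∈ (F : Set ℕ) := Nat.sInf_mem (by exact_mod_cast hF)
  have h2 : sInf (F : Set ℕ) + k ∈ ((F.image (· + k) : Finset ℕ) : Set ℕ) := by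
    simp only [Finset.coe_image, Set.mem_image]
    exact ⟨_, h1, rfl⟩
  apply le_antisymm
  · exact Nat.sInf_le h2
  · have h3 : sInf ((F.image (· + k) : Finset ℕ) : Set ℕ) ∈
        ((F.image (· + k) : Finset ℕ) : Set ℕ) := Nat.sInf_mem ⟨_, h2⟩
    rw [Finset.mem_coe, Finset.mem_image] at h3
    obtain ⟨y, hy, hy2⟩ := h3
    have h4 : sInf (F : Set ℕ) ≤ y := Nat.sInf_le (by exact_mod_cast hy)
    omega

lemma shift_mem_S (SS : SchreierSystem) :
    ∀ ξ : Ordinal, ξ < omega1 → ∀ k : ℕ, ∀ E ∈ SS.S ξ, E.image (· + k) ∈ SS.S ξ := by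
  intro ξ
  induction ξ using Ordinal.limitRecOn with
  | zero =>
    intro _ k E hE
    rw [SS.S_zero] at hE ⊢
    rcases hE with h | ⟨n, h⟩
    · subst h; exact Or.inl (by simp)
    · subst h; exact Or.inr ⟨n + k, by simp⟩
  | add_one η ih =>
    intro hlt k E hE
    have hη : η < omega1 := lt_trans (lt_add_one η) hlt
    rw [SS.S_succ] at hE ⊢
    obtain ⟨n, Es, hG, hne, hord, himg, hE⟩ := hE
    refine ⟨n, fun i => (Es i).image (· + k), fun i hi => ih hη k _ (hG i hi),
      fun i hi => (hne i hi).image _, ?_, ?_, ?_⟩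
    · intro i j hij hj a ha b hb
      simp only [Finset.mem_image] at ha hb
      obtain ⟨a', ha', rfl⟩ := ha
      obtain ⟨b', hb', rfl⟩ := hb
      have := hord i j hij hj a' ha' b' hb'
      omega
    · have heq : Finset.image (fun i => sInf (((Es i).image (· + k) : Finset ℕ) : Set ℕ))
          (Finset.range n) =
          (Finset.image (fun i => sInf ((Es i : Finset ℕ) : Set ℕ)) (Finset.range n)).image
            (· + k) := by
        rw [Finset.image_image]
        apply Finset.image_congr
        intro i hi
        simp only [Finset.mem_coe, Finset.mem_range] at hi
        exact shift_sInf (Es i) (hne i hi) k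
      rw [heq]
      intro m hm
      rw [Finset.mem_image] at hm
      obtain ⟨m', hm', rfl⟩ := hm
      have := himg m' hm'
      calc _ ≤ (Finset.image (fun i => sInf ((Es i : Finset ℕ) : Set ℕ)) (Finset.range n)).card :=
            Finset.card_image_le
        _ ≤ m' := this
        _ ≤ m' + k := by omega
    · rw [hE, Finset.biUnion_image]
  | limit η hlim ih =>
    intro hlt k E hE
    rw [SS.S_limit η hlt hlim] at hE ⊢
    obtain ⟨n, hmin, hE⟩ := hE
    refine ⟨n, ?_, ih (SS.seq η n) (SS.seq_lt η hlt hlim n)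
      (lt_trans (SS.seq_lt η hlt hlim n) hlt) k E hE⟩
    intro m hm
    simp only [Finset.mem_image] at hm
    obtain ⟨m', hm', rfl⟩ := hm
    have := hmin m' hm'
    omega

lemma mono_S (SS : SchreierSystem) :
    ∀ ζ : Ordinal, ζ < omega1 → ∀ ξ ≤ ζ,
      ∃ k : ℕ, ∀ E ∈ SS.S ξ, (∀ m ∈ E, k ≤ m) → E ∈ SS.S ζ := by
  intro ζ
  induction ζ using Ordinal.limitRecOn with
  | zero =>
    intro _ ξ hξ
    rw [nonpos_iff_eq_zero] at hξ
    subst hξ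
    exact ⟨0, fun E hE _ => hE⟩
  | add_one η ih =>
    intro hlt ξ hξ
    have hη : η < omega1 := lt_trans (lt_add_one η) hlt
    rcases eq_or_lt_of_le hξ with rfl | hξ'
    · exact ⟨0, fun E hE _ => hE⟩
    have hξη : ξ ≤ η := Order.lt_add_one_iff.mp hξ'
    obtain ⟨k, hk⟩ := ih hη ξ hξη
    refine ⟨max k 1, fun E hE hmin => ?_⟩
    have hEη : E ∈ SS.S η := hk E hE (fun m hm => le_trans (le_max_left k 1) (hmin m hm))
    rw [SS.S_succ]
    rcases E.eq_empty_or_nonempty with rfl | hne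
    · refine ⟨0, fun _ => ∅, ?_, ?_, ?_, ?_, ?_⟩
      · intro i hi; omega
      · intro i hi; omega
      · intro i j hij hj; omega
      · intro n hn; simp at hn
      · simp
    · refine ⟨1, fun _ => E, fun i _ => hEη, fun i _ => hne, ?_, ?_, ?_⟩
      · intro i j hij hj; omega
      · intro n hn
        simp only [Finset.range_one, Finset.image_singleton, Finset.mem_singleton] at hn
        subst hn
        have hmem : sInf ((E : Finset ℕ) : Set ℕ) ∈ (E : Set ℕ) :=
          Nat.sInf_mem (by exact_mod_cast hne)
        have := hmin _ (by exact_mod_cast hmem)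
        simp only [Finset.range_one, Finset.image_singleton, Finset.card_singleton]
        omega
      · simp
  | limit η hlim ih =>
    intro hlt ξ hξ
    rcases eq_or_lt_of_le hξ with rfl | hξ'
    · exact ⟨0, fun E hE _ => hE⟩
    have hex : ∃ n : ℕ, ξ < SS.seq η n := by
      by_contra h
      push_neg at h
      have : (⨆ n : ℕ, SS.seq η n) ≤ ξ := ciSup_le' h
      rw [SS.seq_iSup η hlt hlim] at this
      exact absurd this (not_le.mpr hξ')
    obtain ⟨n, hn⟩ := hex
    have hseqlt : SS.seq η n < omega1 := lt_trans (SS.seq_lt η hlt hlim n) hlt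
    obtain ⟨k, hk⟩ := ih (SS.seq η n) (SS.seq_lt η hlt hlim n) hseqlt ξ (le_of_lt hn)
    refine ⟨max k n, fun E hE hmin => ?_⟩
    rw [SS.S_limit η hlt hlim]
    exact ⟨n, fun m hm => le_trans (le_max_right k n) (hmin m hm),
      hk E hE (fun m hm => le_trans (le_max_left k n) (hmin m hm))⟩

variable {V : Type*} [NormedAddCommGroup V] [NormedSpace ℝ V]

lemma mem_spanClosure_of_blockspan (e : ℕ → V) {u : ℕ → V} (hu : IsBlockSeqOf e u)
    {E : Finset ℕ} {w : V} (hw : w ∈ Submodule.span ℝ (u '' (E : Set ℕ))) :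
    w ∈ spanClosure e := by
  obtain ⟨_, Es, _, hspan⟩ := hu
  have h1 : Submodule.span ℝ (u '' (E : Set ℕ)) ≤ Submodule.span ℝ (Set.range e) := by
    rw [Submodule.span_le]
    rintro x ⟨i, _, rfl⟩
    have := hspan i
    have h2 : Submodule.span ℝ (e '' (Es i : Set ℕ)) ≤ Submodule.span ℝ (Set.range e) :=
      Submodule.span_mono (Set.image_subset_range e _)
    exact h2 this
  exact subset_closure (h1 hw)

lemma distortion_mono_t (e : ℕ → V) (F : Set (Finset ℕ)) {t s : ℝ} (h : t ≤ s) (N : V → ℝ)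
    (hd : IsFamDistortion e F s N) : IsFamDistortion e F t N := by
  refine ⟨hd.1, fun u hu hnorm => ?_⟩
  obtain ⟨E, hEF, v, w, hv, hw, hnv, hnw, hrat⟩ := hd.2 u hu hnorm
  refine ⟨E, hEF, v, w, hv, hw, hnv, hnw, ?_⟩
  obtain ⟨_, _, c, C, hc, hC, hbnd⟩ := hd.1
  have hwX : w ∈ spanClosure e := mem_spanClosure_of_blockspan e hu hw
  have hNw : 0 ≤ N w := le_trans (by positivity) (hbnd w hwX).1
  calc t * N w ≤ s * N w := mul_le_mul_of_nonneg_right h hNw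
    _ < N v := hrat

lemma distortion_transfer (SS : SchreierSystem) (e : ℕ → V) {ξ ζ : Ordinal}
    (hζ : ζ < omega1) (hξζ : ξ ≤ ζ) (t : ℝ) (N : V → ℝ)
    (hd : IsFamDistortion e (SS.S ξ) t N) : IsFamDistortion e (SS.S ζ) t N := by
  refine ⟨hd.1, fun u hu hnorm => ?_⟩
  obtain ⟨k, hk⟩ := mono_S SS ζ hζ ξ hξζ
  have hξlt : ξ < omega1 := lt_of_le_of_lt hξζ hζ
  set u' : ℕ → V := fun i => u (i + k) with hu'def
  have hu' : IsBlockSeqOf e u' := by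
    obtain ⟨hnz, Es, hord, hspan⟩ := hu
    exact ⟨fun n => hnz _, fun n => Es (n + k), fun m n hmn => hord _ _ (by omega),
      fun n => hspan _⟩
  obtain ⟨F, hF, v, w, hv, hw, hnv, hnw, hrat⟩ := hd.2 u' hu' (fun n => hnorm _)
  refine ⟨F.image (· + k), ?_, v, w, ?_, ?_, hnv, hnw, hrat⟩
  · apply hk _ (shift_mem_S SS ξ hξlt k F hF)
    intro m hm
    simp only [Finset.mem_image] at hm
    obtain ⟨m', _, rfl⟩ := hm
    omega
  all_goals {
    have heq : u' '' (F : Set ℕ) = u '' ((F.image (· + k) : Finset ℕ) : Set ℕ) := by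
      rw [Finset.coe_image, ← Set.image_comp]
      rfl
    rw [← heq]
    assumption }

end Aux

/-- For a Banach space `X` with a Schauder basis,
`AD(X) = sup_{n ∈ ℕ} D_n(X)`. -/
theorem statement6 {X : Type*} [NormedAddCommGroup X] [NormedSpace ℝ X] [CompleteSpace X]
    (SS : SchreierSystem) (e : ℕ → X) (he : IsSchauderBasis e) :
    ADidx SS e = ⨆ n : ℕ, Dt SS e (n : ℝ) := by
  have hDle : ∀ n : ℕ, Dt SS e (n : ℝ) ≤ omega1 := fun n =>
    csInf_le' (Set.mem_union_right _ rfl)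
  have hADle : ADidx SS e ≤ omega1 := csInf_le' (Set.mem_union_right _ rfl)
  have hbdd : BddAbove (Set.range fun n : ℕ => Dt SS e (n : ℝ)) := by
    refine ⟨omega1, ?_⟩
    rintro x ⟨n, rfl⟩
    exact hDle n
  apply le_antisymm
  · -- ADidx ≤ sup
    set ζ := ⨆ n : ℕ, Dt SS e (n : ℝ) with hζdef
    have hDζ : ∀ n : ℕ, Dt SS e (n : ℝ) ≤ ζ := fun n => le_ciSup hbdd n
    rcases lt_or_ge ζ omega1 with hlt | hge
    · apply csInf_le'
      left
      refine ⟨hlt, fun t ht => ?_⟩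
      set n := ⌈t⌉₊ with hndef
      have hDn : Dt SS e (n : ℝ) < omega1 := lt_of_le_of_lt (hDζ n) hlt
      have hmem : Dt SS e (n : ℝ) ∈
          ({ξ : Ordinal | ξ < omega1 ∧ ∃ N : X → ℝ, IsFamDistortion e (SS.S ξ) (n : ℝ) N}
            ∪ {omega1}) := csInf_mem ⟨omega1, Set.mem_union_right _ rfl⟩
      rcases hmem with h | h
      · obtain ⟨_, N, hN⟩ := h
        refine ⟨N, distortion_transfer SS e hlt (hDζ n) t N ?_⟩
        exact distortion_mono_t e _ (Nat.le_ceil t) N hN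
      · exact absurd h (ne_of_lt hDn)
    · exact le_trans hADle hge
  · -- sup ≤ ADidx
    apply ciSup_le'
    intro n
    rcases eq_or_lt_of_le hADle with heq | hlt
    · rw [heq]; exact hDle n
    · have hmem : ADidx SS e ∈
          ({ξ : Ordinal | ξ < omega1 ∧
            ∀ t : ℝ, 1 ≤ t → ∃ N : X → ℝ, IsFamDistortion e (SS.S ξ) t N}
            ∪ {omega1}) := csInf_mem ⟨omega1, Set.mem_union_right _ rfl⟩
      rcases hmem with h | h
      · obtain ⟨hαlt, hall⟩ := h
        obtain ⟨N, hN⟩ := hall (max (n : ℝ) 1) (le_max_right _ 1)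
        refine csInf_le' (Set.mem_union_left _ ⟨hαlt, N, ?_⟩)
        exact distortion_mono_t e _ (le_max_left _ 1) N hN
      · exact absurd h (ne_of_lt hlt)
end
end
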